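/- arXiv:1105.0405 — 3 statements merged into one kernel-verified Lean document; each statement's English description precedes it below -/
import Mathlib

section
/- Let X be a planar Peano continuum with basepoint x₀. If H₁ and H₂ are pseudo-Hawaiian earring subgroups of π₁(X,x₀) having a common wedge point x, then H₁ ∼ H₂ (H₁ is similar to H₂). -/
open CategoryTheory unitInterval
open scoped FundamentalGroupoid

noncomputable section

attribute [local instance] Path.Homotopic.setoid

/-- The Hawaiian earring: union of circles of radius 1/(n+1) centered at (0, 1/(n+1)). -/
def HawaiianEarring : Set ℂ :=
  ⋃ n : ℕ, Metric.sphere (Complex.I / (n + 1)) (1 / (n + 1))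

/-- The basepoint 0 of the Hawaiian earring. -/
def heBase : HawaiianEarring :=
  ⟨0, Set.mem_iUnion.mpr ⟨0, by simp [Complex.dist_eq]⟩⟩

/-- A Peano continuum structure on a subset of the plane. -/
structure IsPeanoContinuum (X : Set ℂ) : Prop where
  nonempty : X.Nonempty
  isCompact : IsCompact X
  isConnected : IsConnected X
  locPathConnected : LocPathConnectedSpace X

/-- The Hawaiian earring group. -/
abbrev HEGroup : Type := FundamentalGroup HawaiianEarring heBase

/-- The functor on fundamental groupoids induced by a continuous map. -/
def inducedFunctor {X Y : Type} [TopologicalSpace X] [TopologicalSpace Y] (f : C(X, Y)) :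
    FundamentalGroupoid X ⥤ FundamentalGroupoid Y where
  obj x := ⟨f x.as⟩
  map {x y} p := by exact Path.Homotopic.Quotient.map p f
  map_id _ := rfl
  map_comp {x y z} p q := by
    refine Quotient.inductionOn₂ p q fun a b => ?_
    change (⟦(a.trans b).map f.continuous⟧ : Path.Homotopic.Quotient _ _) =
      ⟦(a.map f.continuous).trans (b.map f.continuous)⟧
    rw [Path.map_trans]

/-- The homomorphism on fundamental groups induced by a continuous map. -/
def inducedHom {X Y : Type} [TopologicalSpace X] [TopologicalSpace Y] (f : C(X, Y)) (x : X) :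
    FundamentalGroup X x →* FundamentalGroup Y (f x) :=
  Functor.mapEnd (FundamentalGroupoid.mk x) (inducedFunctor f)

/-- Change of basepoint along a path: `[g] ↦ [ᾱ * g * α]`. -/
def pathConj {X : Type} [TopologicalSpace X] {a b : X} (α : Path a b) :
    FundamentalGroup X a →* FundamentalGroup X b :=
  (FundamentalGroup.fundamentalGroupMulEquivOfPath α).toMonoidHom

/-- The element of the fundamental group determined by a loop. -/
def loopClass {X : Type} [TopologicalSpace X] {x : X} (γ : Path x x) :
    FundamentalGroup X x :=
  ⟦γ⟧

/-- `X` is semilocally simply connected at `x`. -/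
def SemilocallySimplyConnectedAt (X : Type) [TopologicalSpace X] (x : X) : Prop :=
  ∃ U ∈ nhds x, ∀ γ : Path x x, (∀ t, γ t ∈ U) → γ.Homotopic (Path.refl x)

/-- The bad set of `X`: points where `X` is not semilocally simply connected. -/
def badSet (X : Set ℂ) : Set X :=
  {x | ¬ SemilocallySimplyConnectedAt X x}

/-- A pseudo-Hawaiian earring subgroup: an uncountable homomorphic image of `ℍ`. -/
def IsPseudoHE {X : Set ℂ} (x₀ : X) (H : Subgroup (FundamentalGroup X x₀)) : Prop :=
  ¬ (H : Set (FundamentalGroup X x₀)).Countable ∧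
    ∃ ψ : HEGroup →* FundamentalGroup X x₀, ψ.range = H

/-- `x` is a wedge point of the subgroup `H` of `π₁(X, x₀)`. -/
def IsWedgePoint {X : Set ℂ} (x₀ : X) (H : Subgroup (FundamentalGroup X x₀)) (x : X) : Prop :=
  ∃ (f : C(HawaiianEarring, X)) (_ : f heBase = x) (α : Path (f heBase) x₀),
    ((pathConj α).comp (inducedHom f heBase)).range = H

/-- Similarity of pseudo-Hawaiian earring subgroups. -/
def SimilarPHE {X : Set ℂ} (x₀ : X) (H₁ H₂ : Subgroup (FundamentalGroup X x₀)) : Prop :=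
  ∃ (g : FundamentalGroup X x₀) (H : Subgroup (FundamentalGroup X x₀)),
    IsPseudoHE x₀ H ∧ H₁ ≤ H ∧ ∀ h ∈ H₂, g * h * g⁻¹ ∈ H

/-- `x` is a `φ`-bad point. -/
def IsPhiBad {X Y : Set ℂ} {x₀ : X} {y₀ : Y}
    (φ : FundamentalGroup X x₀ →* FundamentalGroup Y y₀) (x : X) : Prop :=
  ∀ ε > 0, ∃ γ : Path x x, (∀ t, dist ((γ t : ℂ)) ((x : ℂ)) < ε) ∧
    ∃ α : Path x₀ x, φ (pathConj α.symm (loopClass γ)) ≠ 1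

/-- The canonical loop traversing the `n`-th circle of the Hawaiian earring. -/
def heLoop (n : ℕ) : Path heBase heBase where
  toFun t := ⟨Complex.I / (n + 1) - Complex.I / (n + 1) *
      Complex.exp ((2 * Real.pi * t : ℝ) * Complex.I),
    Set.mem_iUnion.mpr ⟨n, by
      simp only [Metric.mem_sphere, Complex.dist_eq]
      rw [sub_sub_cancel_left, norm_neg, norm_mul, Complex.norm_exp_ofReal_mul_I, mul_one,
        norm_div, Complex.norm_I]
      norm_num
      exact_mod_cast Complex.norm_natCast (n + 1)⟩⟩
  continuous_toFun := by
    apply Continuous.subtype_mk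
    fun_prop
  source' := by
    apply Subtype.ext
    simp [heBase]
  target' := by
    apply Subtype.ext
    simp [heBase, Complex.exp_two_pi_mul_I]

/-- The canonical generators of the Hawaiian earring group. -/
def heGen (n : ℕ) : HEGroup := loopClass (heLoop n)

/-- `H` is generated, in the sense of infinite products, by the sequence `g`. -/
def InfGenBy {X : Set ℂ} {x₀ : X} (g : ℕ → FundamentalGroup X x₀)
    (H : Subgroup (FundamentalGroup X x₀)) : Prop :=
  ∃ ψ : HEGroup →* FundamentalGroup X x₀, ψ.range = H ∧ ∀ i, ψ (heGen i) = g i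

/-- Convergence of a sequence of similarity classes of pseudo-Hawaiian earring subgroups,
represented by subgroups `Hseq n` and `Hlim`. -/
def SimilarClassConverges {X : Set ℂ} (x₀ : X) (Hseq : ℕ → Subgroup (FundamentalGroup X x₀))
    (Hlim : Subgroup (FundamentalGroup X x₀)) : Prop :=
  ∃ (g : ℕ → ℕ → FundamentalGroup X x₀) (M : ℕ → ℕ),
    (∀ n, ∃ H', InfGenBy (g n) H' ∧ IsPseudoHE x₀ H' ∧ SimilarPHE x₀ H' (Hseq n)) ∧
    ∀ k : ℕ → ℕ, (∀ n, M n < k n) →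
      ∃ H', InfGenBy (fun n => g n (k n)) H' ∧ IsPseudoHE x₀ H' ∧ SimilarPHE x₀ H' Hlim


open CategoryTheory unitInterval Complex
open scoped FundamentalGroupoid

namespace IfWedge

lemma abs_eq_iff_normSq {w : ℂ} {r : ℝ} (hr : 0 ≤ r) :
    ‖w‖ = r ↔ Complex.normSq w = r ^ 2 := by
  rw [← Complex.sq_norm]
  constructor
  · intro h; rw [h]
  · intro h
    nlinarith [norm_nonneg w, h]

lemma mem_HE_iff {z : ℂ} :
    z ∈ HawaiianEarring ↔ ∃ n : ℕ, ((n : ℝ) + 1) * Complex.normSq z = 2 * z.im := by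
  simp only [HawaiianEarring, Set.mem_iUnion, Metric.mem_sphere, Complex.dist_eq]
  refine exists_congr fun n => ?_
  have hm : (0:ℝ) < (n:ℝ) + 1 := by positivity
  rw [show (Complex.I / ((n:ℂ) + 1)) = Complex.I / (((n:ℝ)+1 : ℝ) : ℂ) by push_cast; ring]
  rw [abs_eq_iff_normSq (by positivity)]
  have key : Complex.normSq (z - Complex.I / ((((n:ℝ)+1):ℝ):ℂ)) =
      Complex.normSq z - 2*z.im/((n:ℝ)+1) + (1/((n:ℝ)+1))^2 := by
    rw [div_eq_mul_inv, ← Complex.ofReal_inv]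
    simp [Complex.normSq_apply, Complex.sub_re, Complex.sub_im, Complex.mul_re, Complex.mul_im]
    field_simp
    ring
  rw [key]
  constructor
  · intro h
    have h' : Complex.normSq z = 2*z.im/((n:ℝ)+1) := by linarith
    rw [h']; field_simp
  · intro h
    have h' : Complex.normSq z = 2*z.im/((n:ℝ)+1) := by
      field_simp; linarith
    rw [h']; ring

end IfWedge
namespace IfWedge

/-- The scaling map sending even circles back to the full earring. -/
def uMap (z : ℂ) : ℂ := ((4 * z.im / (2 * z.im + Complex.normSq z) : ℝ) : ℂ) * z

/-- The scaling map sending circle `n` to circle `2n`. -/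
def eMap (z : ℂ) : ℂ := ((2 * z.im / (4 * z.im - Complex.normSq z) : ℝ) : ℂ) * z

@[simp] lemma uMap_zero : uMap 0 = 0 := by simp [uMap]
@[simp] lemma eMap_zero : eMap 0 = 0 := by simp [eMap]

lemma ofReal_mul_im' (s : ℝ) (z : ℂ) : ((s:ℂ)*z).im = s * z.im := by
  simp [Complex.mul_im]

lemma normSq_ofReal_mul' (s : ℝ) (z : ℂ) :
    Complex.normSq ((s:ℂ)*z) = s^2 * Complex.normSq z := by
  rw [Complex.normSq_mul, Complex.normSq_ofReal]; ring

lemma zero_mem_HE : (0:ℂ) ∈ HawaiianEarring := by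
  rw [mem_HE_iff]; exact ⟨0, by simp⟩

lemma smul_mem_HE_iff {z : ℂ} {s : ℝ} (hs : 0 < s) :
    ((s:ℂ)*z) ∈ HawaiianEarring ↔
      ∃ m : ℕ, ((m:ℝ)+1) * s * Complex.normSq z = 2 * z.im := by
  rw [mem_HE_iff]
  refine exists_congr fun m => ?_
  rw [normSq_ofReal_mul', ofReal_mul_im']
  constructor
  · intro h
    refine mul_right_cancel₀ (ne_of_gt hs) ?_
    linear_combination h
  · intro h
    linear_combination s * h

section pt
variable {z : ℂ} (hz : z ∈ HawaiianEarring) (h0 : z ≠ 0)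

include hz h0 in
lemma im_pos : 0 < z.im := by
  obtain ⟨n, hn⟩ := mem_HE_iff.mp hz
  have hq : 0 < Complex.normSq z := Complex.normSq_pos.mpr h0
  have hN : (0:ℝ) < n+1 := by positivity
  nlinarith

include hz h0 in
lemma normSq_le_two_im : Complex.normSq z ≤ 2 * z.im := by
  obtain ⟨n, hn⟩ := mem_HE_iff.mp hz
  have hq : 0 < Complex.normSq z := Complex.normSq_pos.mpr h0
  have hN : (1:ℝ) ≤ n+1 := by simp [Nat.cast_nonneg]
  nlinarith

include hz in
lemma eMap_mem : eMap z ∈ HawaiianEarring := by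
  rcases eq_or_ne z 0 with rfl | h0
  · simpa using zero_mem_HE
  obtain ⟨n, hn⟩ := mem_HE_iff.mp hz
  have hq : 0 < Complex.normSq z := Complex.normSq_pos.mpr h0
  have hN : (0:ℝ) < (n:ℝ)+1 := by positivity
  have hN1 : (1:ℝ) ≤ (n:ℝ)+1 := by simp [Nat.cast_nonneg]
  have hy : 0 < z.im := im_pos hz h0
  have hy0 : z.im ≠ 0 := ne_of_gt hy
  have hN0 : ((n:ℝ)+1) ≠ 0 := ne_of_gt hN
  have hqv : Complex.normSq z = 2*z.im/((n:ℝ)+1) := by rw [eq_div_iff hN0]; linarith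
  have h2N : (0:ℝ) < 2*((n:ℝ)+1)-1 := by linarith
  have h2N0 : (2*((n:ℝ)+1)-1) ≠ 0 := ne_of_gt h2N
  have hden : (0:ℝ) < 4*z.im - Complex.normSq z := by
    nlinarith [normSq_le_two_im hz h0]
  have hr : 2*z.im/(4*z.im - Complex.normSq z) = ((n:ℝ)+1)/(2*((n:ℝ)+1)-1) := by
    rw [div_eq_div_iff (ne_of_gt hden) h2N0, hqv]; field_simp; ring
  rw [eMap, hr]
  rw [smul_mem_HE_iff (by positivity)]
  refine ⟨2*n, ?_⟩
  rw [hqv]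
  push_cast
  field_simp
  ring

include hz in
lemma uMap_eMap : uMap (eMap z) = z := by
  rcases eq_or_ne z 0 with rfl | h0
  · simp
  obtain ⟨n, hn⟩ := mem_HE_iff.mp hz
  have hq : 0 < Complex.normSq z := Complex.normSq_pos.mpr h0
  have hN : (0:ℝ) < (n:ℝ)+1 := by positivity
  have hN1 : (1:ℝ) ≤ (n:ℝ)+1 := by simp [Nat.cast_nonneg]
  have hy : 0 < z.im := im_pos hz h0
  have hy0 : z.im ≠ 0 := ne_of_gt hy
  have hN0 : ((n:ℝ)+1) ≠ 0 := ne_of_gt hN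
  have hqv : Complex.normSq z = 2*z.im/((n:ℝ)+1) := by rw [eq_div_iff hN0]; linarith
  have h2N : (0:ℝ) < 2*((n:ℝ)+1)-1 := by linarith
  have h2N0 : (2*((n:ℝ)+1)-1) ≠ 0 := ne_of_gt h2N
  have hden : (0:ℝ) < 4*z.im - Complex.normSq z := by
    nlinarith [normSq_le_two_im hz h0]
  have hr : 2*z.im/(4*z.im - Complex.normSq z) = ((n:ℝ)+1)/(2*((n:ℝ)+1)-1) := by
    rw [div_eq_div_iff (ne_of_gt hden) h2N0, hqv]; field_simp; ring
  set r : ℝ := ((n:ℝ)+1)/(2*((n:ℝ)+1)-1) with hrdef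
  have hrpos : 0 < r := by positivity
  have heq : eMap z = ((r:ℝ):ℂ) * z := by rw [eMap, hr]
  rw [heq, uMap, ofReal_mul_im', normSq_ofReal_mul']
  rw [← mul_assoc, ← Complex.ofReal_mul]
  have hscal : 4*(r*z.im)/(2*(r*z.im) + r^2*Complex.normSq z) * r = 1 := by
    rw [hqv, hrdef]
    field_simp
    have h12 : (1 + (n:ℝ)*2) ≠ 0 := by positivity
    ring_nf
    field_simp
    ring
  rw [hscal]
  simp

include hz h0 in
lemma not_two_eMap_mem : ¬ ((2:ℂ) * eMap z ∈ HawaiianEarring) := by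
  obtain ⟨n, hn⟩ := mem_HE_iff.mp hz
  have hq : 0 < Complex.normSq z := Complex.normSq_pos.mpr h0
  have hN : (0:ℝ) < (n:ℝ)+1 := by positivity
  have hN1 : (1:ℝ) ≤ (n:ℝ)+1 := by simp [Nat.cast_nonneg]
  have hy : 0 < z.im := im_pos hz h0
  have hy0 : z.im ≠ 0 := ne_of_gt hy
  have hN0 : ((n:ℝ)+1) ≠ 0 := ne_of_gt hN
  have hqv : Complex.normSq z = 2*z.im/((n:ℝ)+1) := by rw [eq_div_iff hN0]; linarith
  have h2N : (0:ℝ) < 2*((n:ℝ)+1)-1 := by linarith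
  have h2N0 : (2*((n:ℝ)+1)-1) ≠ 0 := ne_of_gt h2N
  have hden : (0:ℝ) < 4*z.im - Complex.normSq z := by
    nlinarith [normSq_le_two_im hz h0]
  have hr : 2*z.im/(4*z.im - Complex.normSq z) = ((n:ℝ)+1)/(2*((n:ℝ)+1)-1) := by
    rw [div_eq_div_iff (ne_of_gt hden) h2N0, hqv]; field_simp; ring
  set r : ℝ := ((n:ℝ)+1)/(2*((n:ℝ)+1)-1) with hrdef
  have hrpos : 0 < r := by positivity
  have heq : (2:ℂ) * eMap z = (((2*r : ℝ)):ℂ) * z := by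
    rw [eMap, hr, ← mul_assoc]; push_cast; ring
  rw [heq, smul_mem_HE_iff (by positivity)]
  rintro ⟨m, hm⟩
  rw [hqv, hrdef] at hm
  field_simp at hm
  have h2 : (2*((m:ℝ)+1) - (2*((n:ℝ)+1)-1)) * (2*z.im*((n:ℝ)+1)) = 0 := by
    linear_combination (2*z.im*((n:ℝ)+1)) * hm
  rcases mul_eq_zero.mp h2 with h | h
  · have key : ((2*(m+1) : ℕ) : ℝ) = ((2*n+1 : ℕ) : ℝ) := by push_cast; linarith
    have := Nat.cast_injective (R := ℝ) key
    omega
  · have : (0:ℝ) < 2*z.im*((n:ℝ)+1) := by positivity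
    linarith

include hz in
lemma half_mem : z/2 ∈ HawaiianEarring := by
  rcases eq_or_ne z 0 with rfl | h0
  · simpa using zero_mem_HE
  obtain ⟨n, hn⟩ := mem_HE_iff.mp hz
  have heq : z/2 = (((1/2 : ℝ)):ℂ) * z := by push_cast; ring
  rw [heq, smul_mem_HE_iff (by norm_num)]
  exact ⟨2*n+1, by push_cast; linarith⟩

include hz in
lemma uMap_mem_of_not_double : ¬ ((2:ℂ)*z ∈ HawaiianEarring) → uMap z ∈ HawaiianEarring := by
  intro hnd
  rcases eq_or_ne z 0 with rfl | h0
  · exact absurd (by simpa using zero_mem_HE) hnd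
  obtain ⟨n, hn⟩ := mem_HE_iff.mp hz
  have hq : 0 < Complex.normSq z := Complex.normSq_pos.mpr h0
  have hN : (0:ℝ) < (n:ℝ)+1 := by positivity
  have hy : 0 < z.im := im_pos hz h0
  have hy0 : z.im ≠ 0 := ne_of_gt hy
  have hN0 : ((n:ℝ)+1) ≠ 0 := ne_of_gt hN
  have hqv : Complex.normSq z = 2*z.im/((n:ℝ)+1) := by rw [eq_div_iff hN0]; linarith
  rcases Nat.even_or_odd n with ⟨k, hk⟩ | ⟨k, hk⟩
  · -- n = 2k : even circle, uMap z ∈ HE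
    subst hk
    have hden : (0:ℝ) < 2*z.im + Complex.normSq z := by positivity
    rw [uMap, smul_mem_HE_iff (by positivity)]
    refine ⟨k, ?_⟩
    rw [hqv]
    push_cast
    field_simp
    ring
  · -- n = 2k+1 : odd circle, contradiction with hnd
    exfalso
    apply hnd
    have heq : (2:ℂ)*z = (((2:ℝ)):ℂ) * z := by push_cast; ring
    rw [heq, smul_mem_HE_iff (by norm_num)]
    refine ⟨k, ?_⟩
    rw [hqv, hk]
    push_cast
    field_simp
    ring

include hz h0 in
lemma not_uMap_mem_of_double : (2:ℂ)*z ∈ HawaiianEarring → ¬ (uMap z ∈ HawaiianEarring) := by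
  intro hd hu
  obtain ⟨n, hn⟩ := mem_HE_iff.mp hz
  have hq : 0 < Complex.normSq z := Complex.normSq_pos.mpr h0
  have hN : (0:ℝ) < (n:ℝ)+1 := by positivity
  have hy : 0 < z.im := im_pos hz h0
  have hy0 : z.im ≠ 0 := ne_of_gt hy
  have hN0 : ((n:ℝ)+1) ≠ 0 := ne_of_gt hN
  have hqv : Complex.normSq z = 2*z.im/((n:ℝ)+1) := by rw [eq_div_iff hN0]; linarith
  have heq : (2:ℂ)*z = (((2:ℝ)):ℂ) * z := by push_cast; ring
  rw [heq, smul_mem_HE_iff (by norm_num)] at hd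
  obtain ⟨m, hm⟩ := hd
  -- (m+1)*2*q = 2y  ⟹  n+1 = 2(m+1)
  have hodd : ((n:ℝ)+1) = 2*((m:ℝ)+1) := by
    rw [hqv] at hm
    field_simp at hm
    nlinarith [hm]
  have hden : (0:ℝ) < 2*z.im + Complex.normSq z := by positivity
  rw [uMap, smul_mem_HE_iff (by positivity)] at hu
  obtain ⟨j, hj⟩ := hu
  rw [hqv] at hj
  field_simp at hj
  have h2 : (2*((j:ℝ)+1) - (((n:ℝ)+1)+1)) * (4*z.im^2*((n:ℝ)+1)) = 0 := by
    linear_combination (2*z.im^2*((n:ℝ)+1)) * hj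
  rcases mul_eq_zero.mp h2 with h | h
  · rw [hodd] at h
    have key : ((2*(j+1) : ℕ) : ℝ) = ((2*(m+1)+1 : ℕ) : ℝ) := by push_cast; linarith
    have := Nat.cast_injective (R := ℝ) key
    omega
  · have : (0:ℝ) < 4*z.im^2*((n:ℝ)+1) := by positivity
    linarith

end pt
end IfWedge
namespace IfWedge

lemma isClosed_HE : IsClosed HawaiianEarring := by
  rw [← isOpen_compl_iff]
  rw [isOpen_iff_mem_nhds]
  intro z hz
  rcases eq_or_ne z 0 with rfl | h0
  · exact absurd zero_mem_HE hz
  -- z ≠ 0, z ∉ HE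
  by_contra hcon
  -- then z ∈ closure HE
  have hclos : z ∈ closure HawaiianEarring := by
    rw [mem_closure_iff_nhds]
    intro t ht
    by_contra hemp
    apply hcon
    rw [mem_nhds_iff] at ht ⊢
    obtain ⟨u, hu, huo, hzu⟩ := ht
    refine ⟨u, fun w hw => fun hwHE => ?_, huo, hzu⟩
    rw [Set.not_nonempty_iff_eq_empty] at hemp
    exact Set.eq_empty_iff_forall_notMem.mp hemp w ⟨hu hw, hwHE⟩
  have hclos' : z ∈ closure (HawaiianEarring \ {0}) := by
    have : HawaiianEarring ⊆ (HawaiianEarring \ {0}) ∪ {0} := by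
      intro w hw; by_cases h : w = 0
      · exact Or.inr (by simp [h])
      · exact Or.inl ⟨hw, h⟩
    have h2 := closure_mono this hclos
    rw [closure_union, closure_singleton] at h2
    rcases h2 with h | h
    · exact h
    · exact absurd (Set.mem_singleton_iff.mp h) h0
  set h : ℂ → ℝ := fun w => 2*w.im / Complex.normSq w with hh
  have hcont : ContinuousWithinAt h (HawaiianEarring \ {0}) z := by
    apply ContinuousAt.continuousWithinAt
    apply ContinuousAt.div
    · fun_prop
    · exact Complex.continuous_normSq.continuousAt
    · exact Complex.normSq_pos.mpr h0 |>.ne'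
  have himg : h z ∈ closure (h '' (HawaiianEarring \ {0})) :=
    hcont.mem_closure_image hclos'
  have hsub : h '' (HawaiianEarring \ {0}) ⊆ Set.range (fun n : ℕ => ((n:ℝ)+1)) := by
    rintro t ⟨w, ⟨hw, hw0⟩, rfl⟩
    obtain ⟨n, hn⟩ := mem_HE_iff.mp hw
    have hq : 0 < Complex.normSq w := Complex.normSq_pos.mpr (by simpa using hw0)
    refine ⟨n, ?_⟩
    rw [hh]
    field_simp
    linarith
  have hrange : IsClosed (Set.range (fun n : ℕ => ((n:ℝ)+1))) := by
    have : Set.range (fun n : ℕ => ((n:ℝ)+1)) =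
        (fun t : ℝ => t - 1) ⁻¹' (Set.range ((↑) : ℕ → ℝ)) := by
      ext t
      constructor
      · rintro ⟨n, rfl⟩; exact ⟨n, by push_cast; ring⟩
      · rintro ⟨n, hn⟩; exact ⟨n, by push_cast at hn ⊢; linarith⟩
    rw [this]
    exact Nat.isClosedEmbedding_coe_real.isClosed_range.preimage (by fun_prop)
  have := (closure_minimal hsub hrange) himg
  obtain ⟨n, hn⟩ := this
  refine absurd (mem_HE_iff.mpr ⟨n, ?_⟩) hz
  have hq : 0 < Complex.normSq z := Complex.normSq_pos.mpr h0
  have h3 : 2*z.im / Complex.normSq z = (n:ℝ)+1 := hn.symm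
  field_simp at h3
  linarith

end IfWedge
namespace IfWedge

lemma den_u_pos {z : ℂ} (hz : z ∈ HawaiianEarring) (h0 : z ≠ 0) :
    0 < 2*z.im + Complex.normSq z := by
  have := im_pos hz h0
  have := Complex.normSq_pos.mpr h0
  linarith

lemma norm_uMap_le {z : ℂ} (hz : z ∈ HawaiianEarring) : ‖uMap z‖ ≤ 2*‖z‖ := by
  rcases eq_or_ne z 0 with rfl | h0
  · simp
  have hy := im_pos hz h0
  have hq := Complex.normSq_pos.mpr h0
  rw [uMap, norm_mul, Complex.norm_real]
  have hs : 4*z.im/(2*z.im + Complex.normSq z) ≤ 2 := by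
    rw [div_le_iff₀ (by linarith)]; linarith
  have hs0 : 0 ≤ 4*z.im/(2*z.im + Complex.normSq z) := by positivity
  rw [Real.norm_of_nonneg hs0]
  calc 4*z.im/(2*z.im + Complex.normSq z) * ‖z‖ ≤ 2 * ‖z‖ := by
        apply mul_le_mul_of_nonneg_right hs (norm_nonneg z)
    _ = 2*‖z‖ := by ring

lemma norm_eMap_le {z : ℂ} (hz : z ∈ HawaiianEarring) : ‖eMap z‖ ≤ ‖z‖ := by
  rcases eq_or_ne z 0 with rfl | h0
  · simp
  have hy := im_pos hz h0
  have hq := Complex.normSq_pos.mpr h0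
  have hle := normSq_le_two_im hz h0
  rw [eMap, norm_mul, Complex.norm_real]
  have hden : 0 < 4*z.im - Complex.normSq z := by linarith
  have hs : 2*z.im/(4*z.im - Complex.normSq z) ≤ 1 := by
    rw [div_le_one hden]; linarith
  have hs0 : 0 ≤ 2*z.im/(4*z.im - Complex.normSq z) := by positivity
  rw [Real.norm_of_nonneg hs0]
  nth_rewrite 2 [show ‖z‖ = 1 * ‖z‖ by ring]
  exact mul_le_mul_of_nonneg_right hs (norm_nonneg z)

lemma continuousAt_uMap {z₀ : ℂ} (h : 2*z₀.im + Complex.normSq z₀ ≠ 0) :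
    ContinuousAt uMap z₀ := by
  apply ContinuousAt.mul _ continuousAt_id
  apply Complex.continuous_ofReal.continuousAt.comp
  exact ContinuousAt.div (by fun_prop)
    (((continuous_const.mul Complex.continuous_im).add Complex.continuous_normSq).continuousAt) h

lemma continuousAt_eMap {z₀ : ℂ} (h : 4*z₀.im - Complex.normSq z₀ ≠ 0) :
    ContinuousAt eMap z₀ := by
  apply ContinuousAt.mul _ continuousAt_id
  apply Complex.continuous_ofReal.continuousAt.comp
  exact ContinuousAt.div (by fun_prop)
    (((continuous_const.mul Complex.continuous_im).sub Complex.continuous_normSq).continuousAt) h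

lemma continuous_uMap_sub : Continuous (fun w : HawaiianEarring => uMap (w:ℂ)) := by
  rw [continuous_iff_continuousAt]
  intro w
  rcases eq_or_ne (w:ℂ) 0 with h0 | h0
  · have htend : Filter.Tendsto (fun v : HawaiianEarring => uMap (v:ℂ))
        (nhds w) (nhds 0) := by
      apply squeeze_zero_norm (fun v => norm_uMap_le v.2)
      have hc : Continuous (fun v : HawaiianEarring => 2*‖(v:ℂ)‖) :=
        continuous_const.mul continuous_subtype_val.norm
      have := hc.continuousAt (x := w)
      rw [ContinuousAt] at this
      convert this using 2
      simp [h0]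
    have hval : uMap ((w:ℂ)) = 0 := by rw [h0]; simp
    rw [ContinuousAt, hval]
    exact htend
  · exact (continuousAt_uMap (ne_of_gt (den_u_pos w.2 h0))).comp
      continuous_subtype_val.continuousAt

lemma continuous_eMap_sub : Continuous (fun w : HawaiianEarring => eMap (w:ℂ)) := by
  rw [continuous_iff_continuousAt]
  intro w
  rcases eq_or_ne (w:ℂ) 0 with h0 | h0
  · have htend : Filter.Tendsto (fun v : HawaiianEarring => eMap (v:ℂ))
        (nhds w) (nhds 0) := by
      apply squeeze_zero_norm (fun v => norm_eMap_le v.2)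
      have hc : Continuous (fun v : HawaiianEarring => ‖(v:ℂ)‖) :=
        continuous_subtype_val.norm
      have := hc.continuousAt (x := w)
      rw [ContinuousAt] at this
      convert this using 2
      simp [h0]
    have hval : eMap ((w:ℂ)) = 0 := by rw [h0]; simp
    rw [ContinuousAt, hval]
    exact htend
  · have hy := im_pos w.2 h0
    have hle := normSq_le_two_im w.2 h0
    exact (continuousAt_eMap (by linarith)).comp continuous_subtype_val.continuousAt

/-- The map sending circle `n` homeomorphically onto circle `2n`. -/
def eHat : C(HawaiianEarring, HawaiianEarring) :=
  ⟨fun w => ⟨eMap (w:ℂ), eMap_mem w.2⟩, continuous_eMap_sub.subtype_mk _⟩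

/-- The map sending circle `n` homeomorphically onto circle `2n+1` (`z ↦ z/2`). -/
def dHat : C(HawaiianEarring, HawaiianEarring) :=
  ⟨fun w => ⟨(w:ℂ)/2, half_mem w.2⟩, (continuous_subtype_val.div_const 2).subtype_mk _⟩

@[simp] lemma eHat_base : eHat heBase = heBase := by
  apply Subtype.ext; show eMap (0:ℂ) = 0; simp

@[simp] lemma dHat_base : dHat heBase = heBase := by
  apply Subtype.ext; show (0:ℂ)/2 = 0; simp

end IfWedge
namespace IfWedge

open Classical in
/-- Glue two earring maps into one along even/odd circles. -/
lemma exists_G {X : Set ℂ} (f₁ f₂ : C(HawaiianEarring, X)) (x : X)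
    (hf₁ : f₁ heBase = x) (hf₂ : f₂ heBase = x) :
    ∃ G : C(HawaiianEarring, X),
      (∀ z : HawaiianEarring, G (eHat z) = f₁ z) ∧
      (∀ z : HawaiianEarring, G (dHat z) = f₂ z) := by
  obtain ⟨F₁, hF₁⟩ := ContinuousMap.exists_restrict_eq (X := ℂ) isClosed_HE
    (ContinuousMap.comp ⟨Subtype.val, continuous_subtype_val⟩ f₁)
  obtain ⟨F₂, hF₂⟩ := ContinuousMap.exists_restrict_eq (X := ℂ) isClosed_HE
    (ContinuousMap.comp ⟨Subtype.val, continuous_subtype_val⟩ f₂)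
  have hF₁w : ∀ w : HawaiianEarring, F₁ (w:ℂ) = ((f₁ w : X) : ℂ) := by
    intro w
    have := congrFun (congrArg DFunLike.coe hF₁) w
    simpa [ContinuousMap.restrict_apply] using this
  have hF₂w : ∀ w : HawaiianEarring, F₂ (w:ℂ) = ((f₂ w : X) : ℂ) := by
    intro w
    have := congrFun (congrArg DFunLike.coe hF₂) w
    simpa [ContinuousMap.restrict_apply] using this
  set B' : Set HawaiianEarring := {w | (2:ℂ)*(w:ℂ) ∈ HawaiianEarring} with hB'
  have hB'closed : IsClosed B' :=
    isClosed_HE.preimage (continuous_const.mul continuous_subtype_val)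
  set A' : Set HawaiianEarring := {w | uMap (w:ℂ) ∈ HawaiianEarring} with hA'
  have hA'closed : IsClosed A' := isClosed_HE.preimage continuous_uMap_sub
  have hcompl : B'ᶜ ⊆ A' := fun w hw => uMap_mem_of_not_double w.2 hw
  have hBA : ∀ w : HawaiianEarring, w ∈ B' → w ∈ A' → (w:ℂ) = 0 := by
    intro w hwB hwA
    by_contra h0
    exact not_uMap_mem_of_double w.2 h0 hwB hwA
  have hbase_mem : heBase ∈ B' := by
    show (2:ℂ)*((heBase : HawaiianEarring):ℂ) ∈ HawaiianEarring
    show (2:ℂ)*(0:ℂ) ∈ HawaiianEarring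
    simpa using zero_mem_HE
  have hF₁0 : F₁ 0 = (x : ℂ) := by
    have := hF₁w heBase
    rw [hf₁] at this
    exact this
  have hF₂0 : F₂ 0 = (x : ℂ) := by
    have := hF₂w heBase
    rw [hf₂] at this
    exact this
  have hfront : ∀ w ∈ frontier B',
      (fun w : HawaiianEarring => F₂ ((2:ℂ)*(w:ℂ))) w =
      (fun w : HawaiianEarring => F₁ (uMap (w:ℂ))) w := by
    intro w hw
    rw [frontier_eq_closure_inter_closure] at hw
    have hwB : w ∈ B' := hB'closed.closure_eq ▸ hw.1
    have hwA : w ∈ A' := by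
      have := closure_mono hcompl hw.2
      rwa [hA'closed.closure_eq] at this
    have h0 : (w:ℂ) = 0 := hBA w hwB hwA
    simp only [h0]
    norm_num
    rw [hF₁0, hF₂0]
  set GFun : HawaiianEarring → ℂ :=
    B'.piecewise (fun w => F₂ ((2:ℂ)*(w:ℂ))) (fun w => F₁ (uMap (w:ℂ))) with hGFun
  have hGc : Continuous GFun :=
    Continuous.piecewise hfront
      (F₂.continuous.comp (continuous_const.mul continuous_subtype_val))
      (F₁.continuous.comp continuous_uMap_sub)
  have hGmem : ∀ w, GFun w ∈ X := by
    intro w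
    by_cases h : w ∈ B'
    · rw [hGFun, Set.piecewise_eq_of_mem _ _ _ h]
      rw [show F₂ ((2:ℂ)*(w:ℂ)) = ((f₂ ⟨(2:ℂ)*(w:ℂ), h⟩ : X) : ℂ) from hF₂w ⟨_, h⟩]
      exact (f₂ ⟨(2:ℂ)*(w:ℂ), h⟩).2
    · rw [hGFun, Set.piecewise_eq_of_notMem _ _ _ h]
      have hu : uMap (w:ℂ) ∈ HawaiianEarring := uMap_mem_of_not_double w.2 h
      rw [show F₁ (uMap (w:ℂ)) = ((f₁ ⟨uMap (w:ℂ), hu⟩ : X) : ℂ) from hF₁w ⟨_, hu⟩]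
      exact (f₁ ⟨uMap (w:ℂ), hu⟩).2
  refine ⟨⟨fun w => ⟨GFun w, hGmem w⟩, hGc.subtype_mk _⟩, ?_, ?_⟩
  · intro z
    apply Subtype.ext
    show GFun (eHat z) = ((f₁ z : X) : ℂ)
    rcases eq_or_ne (z:ℂ) 0 with h0 | h0
    · have hz : z = heBase := Subtype.ext h0
      subst hz
      rw [eHat_base, hGFun, Set.piecewise_eq_of_mem _ _ _ hbase_mem]
      show F₂ ((2:ℂ)*(0:ℂ)) = _
      norm_num
      rw [hF₂0, hf₁]
    · have hnot : eHat z ∉ B' := by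
        show ¬ ((2:ℂ)*((eHat z : HawaiianEarring):ℂ) ∈ HawaiianEarring)
        show ¬ ((2:ℂ)*(eMap (z:ℂ)) ∈ HawaiianEarring)
        exact not_two_eMap_mem z.2 h0
      rw [hGFun, Set.piecewise_eq_of_notMem _ _ _ hnot]
      show F₁ (uMap (eMap (z:ℂ))) = _
      rw [uMap_eMap z.2]
      exact hF₁w z
  · intro z
    apply Subtype.ext
    show GFun (dHat z) = ((f₂ z : X) : ℂ)
    have hmem : dHat z ∈ B' := by
      show (2:ℂ)*((dHat z : HawaiianEarring):ℂ) ∈ HawaiianEarring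
      show (2:ℂ)*((z:ℂ)/2) ∈ HawaiianEarring
      rw [show (2:ℂ)*((z:ℂ)/2) = (z:ℂ) by ring]
      exact z.2
    rw [hGFun, Set.piecewise_eq_of_mem _ _ _ hmem]
    show F₂ ((2:ℂ)*((z:ℂ)/2)) = _
    rw [show (2:ℂ)*((z:ℂ)/2) = (z:ℂ) by ring]
    exact hF₂w z

end IfWedge
namespace IfWedge

variable {Y : Type} [TopologicalSpace Y]

/-- A path as a morphism of the fundamental groupoid. -/
def toHom {a b : Y} (p : Path a b) :
    FundamentalGroupoid.mk a ⟶ FundamentalGroupoid.mk b :=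
  ⟦p⟧

lemma fg_ext {y : Y} {a b : FundamentalGroup Y y} (h : a.toArrow = b.toArrow) : a = b :=
  h

lemma loopClass_hom {y : Y} (γ : Path y y) : (loopClass γ).toArrow = toHom γ := rfl

lemma exists_loopClass {y : Y} (q : FundamentalGroup Y y) :
    ∃ γ : Path y y, q = loopClass γ := by
  obtain ⟨γ, hγ⟩ := Quotient.exists_rep q.toArrow
  exact ⟨γ, fg_ext (by rw [loopClass_hom, toHom, hγ])⟩

lemma inducedHom_loopClass {Z : Type} [TopologicalSpace Z] (f : C(Y, Z)) (y : Y)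
    (γ : Path y y) :
    inducedHom f y (loopClass γ) = loopClass (γ.map f.continuous) := by
  rfl

lemma loopClass_mul {y : Y} (p q : Path y y) :
    loopClass p * loopClass q = loopClass (q.trans p) := by
  rfl

lemma loopClass_inv {y : Y} (p : Path y y) : (loopClass p)⁻¹ = loopClass p.symm :=
  fg_ext rfl

lemma aut_mul_hom {y : Y} (u v : FundamentalGroup Y y) : (u*v).toArrow = v.toArrow ≫ u.toArrow := rfl

lemma pathConj_hom {a b : Y} (α : Path a b) (q : FundamentalGroup Y a) :
    (pathConj α q).toArrow = CategoryTheory.inv (toHom α) ≫ q.toArrow ≫ toHom α := by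
  rw [← Groupoid.inv_eq_inv]
  rfl

lemma quot_symm {a b : Y} (α : Path a b) :
    CategoryTheory.inv (toHom α) = toHom α.symm := by
  rw [← Groupoid.inv_eq_inv]
  rfl

lemma quot_trans {a b c : Y} (p : Path a b) (q : Path b c) :
    toHom (p.trans q) = toHom p ≫ toHom q :=
  rfl

lemma pathConj_loopClass_congr {a b x₀ : Y} (h : a = b) (α : Path a x₀) (β : Path b x₀)
    (γ : Path a a) (δ : Path b b) (hαβ : ∀ t, α t = β t) (hγδ : ∀ t, γ t = δ t) :
    pathConj α (loopClass γ) = pathConj β (loopClass δ) := by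
  subst h
  have hα : α = β := by ext t; exact hαβ t
  have hγ : γ = δ := by ext t; exact hγδ t
  rw [hα, hγ]

lemma pathConj_conj {a x₀ : Y} (α β : Path a x₀) (q : FundamentalGroup Y a) :
    pathConj β q =
      loopClass (α.symm.trans β) * pathConj α q * (loopClass (α.symm.trans β))⁻¹ := by
  apply fg_ext
  rw [aut_mul_hom, aut_mul_hom, pathConj_hom, pathConj_hom]
  have hcalc : ((loopClass (α.symm.trans β))⁻¹).toArrow = toHom ((α.symm.trans β).symm) := by
    rw [loopClass_inv, loopClass_hom]
  rw [hcalc, loopClass_hom]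
  have hp : toHom (α.symm.trans β) = CategoryTheory.inv (toHom α) ≫ toHom β := by
    rw [quot_trans, quot_symm]
  have hps : toHom ((α.symm.trans β).symm) =
      CategoryTheory.inv (toHom β) ≫ toHom α := by
    rw [Path.trans_symm, Path.symm_symm, quot_trans, ← quot_symm]
  rw [hp, hps]
  simp

end IfWedge


/-- Lemma `ifwedge`: two pseudo-Hawaiian earring subgroups with a common wedge point are
similar. -/
theorem similar_of_common_wedge_point
    (X : Set ℂ) (hX : IsPeanoContinuum X) (x₀ : X)
    (H₁ H₂ : Subgroup (FundamentalGroup X x₀))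
    (h₁ : IsPseudoHE x₀ H₁) (h₂ : IsPseudoHE x₀ H₂)
    (x : X) (hx₁ : IsWedgePoint x₀ H₁ x) (hx₂ : IsWedgePoint x₀ H₂ x) :
    SimilarPHE x₀ H₁ H₂ := by
  classical
  obtain ⟨f₁, hf₁, α₁, hH₁⟩ := hx₁
  obtain ⟨f₂, hf₂, α₂, hH₂⟩ := hx₂
  obtain ⟨G, hGe, hGd⟩ := IfWedge.exists_G f₁ f₂ x hf₁ hf₂
  have hGbase : G heBase = x := by
    have h := hGd heBase
    rw [IfWedge.dHat_base] at h
    rw [h, hf₂]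
  have hb1 : G heBase = f₁ heBase := by rw [hGbase, hf₁]
  have hb2 : G heBase = f₂ heBase := by rw [hGbase, hf₂]
  set β : Path (G heBase) x₀ := α₁.cast hb1 rfl with hβ
  set β₂ : Path (G heBase) x₀ := α₂.cast hb2 rfl with hβ₂
  set ψ : HEGroup →* FundamentalGroup X x₀ :=
    (pathConj β).comp (inducedHom G heBase) with hψ
  have claim1 : H₁ ≤ ψ.range := by
    rw [← hH₁]
    rintro q ⟨p, rfl⟩
    obtain ⟨γ, rfl⟩ := IfWedge.exists_loopClass p
    refine ⟨loopClass ((γ.map IfWedge.eHat.continuous).cast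
      IfWedge.eHat_base.symm IfWedge.eHat_base.symm), ?_⟩
    rw [hψ, MonoidHom.comp_apply, MonoidHom.comp_apply,
      IfWedge.inducedHom_loopClass, IfWedge.inducedHom_loopClass]
    refine IfWedge.pathConj_loopClass_congr hb1 β α₁ _ _ (fun t => rfl) (fun t => ?_)
    show G (IfWedge.eHat (γ t)) = f₁ (γ t)
    exact hGe (γ t)
  set g0 : FundamentalGroup X x₀ := loopClass (β.symm.trans β₂) with hg0
  have claim2 : ∀ h ∈ H₂, g0⁻¹ * h * (g0⁻¹)⁻¹ ∈ ψ.range := by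
    intro h hh
    rw [← hH₂] at hh
    obtain ⟨p, rfl⟩ := hh
    obtain ⟨γ, rfl⟩ := IfWedge.exists_loopClass p
    rw [MonoidHom.comp_apply, IfWedge.inducedHom_loopClass]
    set sig : Path heBase heBase := (γ.map IfWedge.dHat.continuous).cast
      IfWedge.dHat_base.symm IfWedge.dHat_base.symm with hsig
    have hψsig : ψ (loopClass sig) = pathConj β (loopClass (sig.map G.continuous)) := by
      rw [hψ, MonoidHom.comp_apply, IfWedge.inducedHom_loopClass]
    have step1 : pathConj α₂ (loopClass (γ.map f₂.continuous)) =
        pathConj β₂ (loopClass (sig.map G.continuous)) := by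
      refine (IfWedge.pathConj_loopClass_congr hb2 β₂ α₂ _ _ (fun t => rfl)
        (fun t => ?_)).symm
      show G (IfWedge.dHat (γ t)) = f₂ (γ t)
      exact hGd (γ t)
    have step2 := IfWedge.pathConj_conj β β₂ (loopClass (sig.map G.continuous))
    have key : pathConj α₂ (loopClass (γ.map f₂.continuous)) =
        g0 * (ψ (loopClass sig)) * g0⁻¹ := by
      rw [step1, step2, hψsig, hg0]
    rw [key]
    refine ⟨loopClass sig, ?_⟩
    group
  refine ⟨g0⁻¹, ψ.range, ⟨?_, ⟨ψ, rfl⟩⟩, claim1, claim2⟩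
  intro hc
  exact h₁.1 (Set.Countable.mono (SetLike.coe_subset_coe.mpr claim1) hc)
end
end

section
/- Let X and Z be metric spaces and Y a topological space such that X × Y is first-countable. Let H : X × Y → Z be a function, and let (Cᵢ) be a sequence of closed subsets of X with ⋃ᵢ Cᵢ = X and diam(Cᵢ) → 0, such that the restriction of H to Cᵢ × Y is continuous for each i and the sets Dᵢ = H(Cᵢ × Y) satisfy diam(Dᵢ) → 0. Assume that for every point x₀ ∈ X and every subsequence (C_{i_k}) converging to x₀ (meaning sup_{p ∈ C_{i_k}} dist(p, x₀) → 0), there exists z₀ ∈ Z with H(x₀, y) = z₀ for all y ∈ Y and sup_{q ∈ D_{i_k}} dist(q, z₀) → 0. Then H is continuous on X × Y. -/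
open Filter Topology

private lemma tendsto_of_edist_tendsto_zero' {Z : Type*} [MetricSpace Z] {u : ℕ → Z} {z : Z}
    (h : Tendsto (fun n => edist (u n) z) atTop (𝓝 0)) : Tendsto u atTop (𝓝 z) := by
  rw [EMetric.tendsto_nhds]
  intro ε hε
  obtain ⟨ε', hε'0, hε'ε⟩ := exists_between hε
  filter_upwards [ENNReal.tendsto_nhds_zero.mp h ε' hε'0] with n hn
  exact lt_of_le_of_lt hn hε'ε

/-- Lemma (Conner–Meilstrup): a function on a product which is continuous on each piece
`Cᵢ × Y` of a null cover by closed sets, with null images `Dᵢ = H(Cᵢ × Y)`, and such that for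
every subsequence of pieces converging to a point `x₀` the corresponding images converge to a
point `z₀` with `H(x₀, ·) ≡ z₀`, is continuous. -/
theorem continuous_of_null_cover
    {X Y Z : Type*} [MetricSpace X] [TopologicalSpace Y] [MetricSpace Z]
    [FirstCountableTopology (X × Y)]
    (H : X × Y → Z) (C : ℕ → Set X)
    (hclosed : ∀ i, IsClosed (C i))
    (hcover : ⋃ i, C i = Set.univ)
    (hnull : Tendsto (fun i => EMetric.diam (C i)) atTop (𝓝 0))
    (hcont : ∀ i, ContinuousOn H ((C i) ×ˢ (Set.univ : Set Y)))
    (hDnull : Tendsto (fun i => EMetric.diam (H '' ((C i) ×ˢ (Set.univ : Set Y))))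
      atTop (𝓝 0))
    (hlim : ∀ (x₀ : X) (φ : ℕ → ℕ), StrictMono φ →
      Tendsto (fun k => ⨆ p ∈ C (φ k), edist p x₀) atTop (𝓝 0) →
      ∃ z₀ : Z, (∀ y : Y, H (x₀, y) = z₀) ∧
        Tendsto (fun k => ⨆ q ∈ H '' ((C (φ k)) ×ˢ (Set.univ : Set Y)), edist q z₀)
          atTop (𝓝 0)) :
    Continuous H := by
  rw [continuous_iff_seqContinuous]
  intro u p₀ hu
  -- choose indices for first coordinates
  have hIex : ∀ n, ∃ i, (u n).1 ∈ C i := by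
    intro n
    have : (u n).1 ∈ ⋃ i, C i := by rw [hcover]; trivial
    exact Set.mem_iUnion.mp this
  choose I hI using hIex
  apply Filter.tendsto_of_subseq_tendsto
  intro ns hns
  by_cases hinf : ∃ m, ∃ᶠ k in atTop, I (ns k) = m
  · -- some piece is hit infinitely often
    obtain ⟨m, hm⟩ := hinf
    obtain ⟨ms, hms, hmseq⟩ := Filter.extraction_of_frequently_atTop hm
    refine ⟨ms, ?_⟩
    have huseq : Tendsto (fun k => u (ns (ms k))) atTop (𝓝 p₀) :=
      hu.comp (hns.comp hms.tendsto_atTop)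
    have hmemx : ∀ k, (u (ns (ms k))).1 ∈ C m := fun k => hmseq k ▸ hI (ns (ms k))
    have hp₀1 : p₀.1 ∈ C m :=
      (hclosed m).mem_of_tendsto ((continuous_fst.tendsto p₀).comp huseq)
        (Eventually.of_forall hmemx)
    have hp₀ : p₀ ∈ (C m) ×ˢ (Set.univ : Set Y) := ⟨hp₀1, trivial⟩
    have := (hcont m p₀ hp₀).tendsto.comp
      (tendsto_nhdsWithin_iff.mpr ⟨huseq, Eventually.of_forall fun k => ⟨hmemx k, trivial⟩⟩)
    exact this
  · -- indices tend to infinity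
    push_neg at hinf
    have hT : Tendsto (fun k => I (ns k)) atTop atTop := by
      rw [tendsto_atTop]
      intro N
      have : ∀ᶠ k in atTop, ∀ m ∈ Finset.range N, I (ns k) ≠ m :=
        (Filter.eventually_all_finset _).mpr fun m _ => hinf m
      filter_upwards [this] with k hk
      by_contra h
      exact hk (I (ns k)) (Finset.mem_range.mpr (lt_of_not_ge h)) rfl
    obtain ⟨ms, hms, hφ⟩ := strictMono_subseq_of_tendsto_atTop hT
    set φ : ℕ → ℕ := fun k => I (ns (ms k)) with hφdef
    have hφmono : StrictMono φ := hφ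
    have huseq : Tendsto (fun k => u (ns (ms k))) atTop (𝓝 p₀) :=
      hu.comp (hns.comp hms.tendsto_atTop)
    have hxseq : Tendsto (fun k => (u (ns (ms k))).1) atTop (𝓝 p₀.1) :=
      (continuous_fst.tendsto p₀).comp huseq
    have hmemx : ∀ k, (u (ns (ms k))).1 ∈ C (φ k) := fun k => hI (ns (ms k))
    have hedist : Tendsto (fun k => edist (u (ns (ms k))).1 p₀.1) atTop (𝓝 0) := by
      have := hxseq.edist (tendsto_const_nhds : Tendsto (fun _ : ℕ => p₀.1) atTop (𝓝 p₀.1))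
      simpa [edist_self] using this
    have hdiam : Tendsto (fun k => EMetric.diam (C (φ k))) atTop (𝓝 0) :=
      hnull.comp (hφmono.tendsto_atTop)
    have hsup : Tendsto (fun k => ⨆ p ∈ C (φ k), edist p p₀.1) atTop (𝓝 0) := by
      apply tendsto_of_tendsto_of_tendsto_of_le_of_le (tendsto_const_nhds : Tendsto (fun _ : ℕ => (0:ENNReal)) atTop (𝓝 0))
        (by simpa using hdiam.add hedist)
      · intro k; exact zero_le
      · intro k
        refine iSup₂_le fun p hp => ?_
        calc edist p p₀.1 ≤ edist p (u (ns (ms k))).1 + edist (u (ns (ms k))).1 p₀.1 :=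
              edist_triangle _ _ _
          _ ≤ EMetric.diam (C (φ k)) + edist (u (ns (ms k))).1 p₀.1 :=
              add_le_add_left (EMetric.edist_le_diam_of_mem hp (hmemx k)) _
    obtain ⟨z₀, hz₀, hD⟩ := hlim p₀.1 φ hφmono hsup
    have hHp₀ : H p₀ = z₀ := by
      have := hz₀ p₀.2
      simpa using this
    refine ⟨ms, ?_⟩
    rw [hHp₀]
    apply tendsto_of_edist_tendsto_zero'
    apply tendsto_of_tendsto_of_tendsto_of_le_of_le (tendsto_const_nhds : Tendsto (fun _ : ℕ => (0:ENNReal)) atTop (𝓝 0)) hD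
    · intro k; exact zero_le
    · intro k
      have hmem : H (u (ns (ms k))) ∈ H '' ((C (φ k)) ×ˢ (Set.univ : Set Y)) :=
        ⟨u (ns (ms k)), ⟨hmemx k, trivial⟩, rfl⟩
      exact le_iSup₂_of_le _ hmem le_rfl
end

section
/- Let X be a Peano continuum and (xₙ)_{n ≥ 1} a sequence in X converging to a point x. Then there exists a path T : [0,1] → X with T(0) = x₁, T(1) = x, and T(1 − 1/n) = xₙ for all n ≥ 1. -/
open unitInterval

/-- The point `1 - 1/n` of the unit interval. -/
noncomputable def seqPoint (n : ℕ) : unitInterval :=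
  ⟨1 - 1 / (n : ℝ), by
    constructor
    · simp only [sub_nonneg]
      rcases Nat.eq_zero_or_pos n with h | h
      · simp [h]
      · rw [div_le_one (by exact_mod_cast h)]
        exact_mod_cast h
    · have : (0 : ℝ) ≤ 1 / (n : ℝ) := by positivity
      linarith⟩

open Metric Set

noncomputable def aSeq (n : ℕ) : ℝ := 1 - 1 / (n : ℝ)

noncomputable def ntOf (t : ℝ) : ℕ := ⌊1 / (1 - t)⌋₊

lemma aSeq_one : aSeq 1 = 0 := by simp [aSeq]

lemma aSeq_nonneg {n : ℕ} (hn : 1 ≤ n) : 0 ≤ aSeq n := by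
  have hn' : (1:ℝ) ≤ (n:ℝ) := by exact_mod_cast hn
  have : 1 / (n:ℝ) ≤ 1 := by rw [div_le_one (by linarith)]; linarith
  simp only [aSeq]; linarith

lemma aSeq_lt_one {n : ℕ} (hn : 1 ≤ n) : aSeq n < 1 := by
  have hn' : (1:ℝ) ≤ (n:ℝ) := by exact_mod_cast hn
  have : 0 < 1 / (n:ℝ) := by positivity
  simp only [aSeq]; linarith

lemma aSeq_lt_succ {n : ℕ} (hn : 1 ≤ n) : aSeq n < aSeq (n+1) := by
  have hn' : (1:ℝ) ≤ (n:ℝ) := by exact_mod_cast hn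
  have h1 : 1 / ((n:ℝ)+1) < 1 / (n:ℝ) := by
    apply one_div_lt_one_div_of_lt <;> linarith
  simp only [aSeq, Nat.cast_add, Nat.cast_one]; linarith

lemma aSeq_mono {m n : ℕ} (hm : 1 ≤ m) (hmn : m ≤ n) : aSeq m ≤ aSeq n := by
  have hm' : (1:ℝ) ≤ (m:ℝ) := by exact_mod_cast hm
  have hmn' : (m:ℝ) ≤ (n:ℝ) := by exact_mod_cast hmn
  have : 1 / (n:ℝ) ≤ 1 / (m:ℝ) := by
    apply one_div_le_one_div_of_le <;> linarith
  simp only [aSeq]; linarith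

lemma ntOf_eq {n : ℕ} {t : ℝ} (hn : 1 ≤ n) (h1 : aSeq n ≤ t) (h2 : t < aSeq (n+1)) :
    ntOf t = n := by
  have hn' : (1:ℝ) ≤ (n:ℝ) := by exact_mod_cast hn
  have ht1 : t < 1 := lt_of_lt_of_le (h2.trans_le (aSeq_lt_one (by omega)).le) le_rfl
  have ht : 0 < 1 - t := by linarith
  simp only [aSeq, Nat.cast_add, Nat.cast_one] at h1 h2
  rw [ntOf, Nat.floor_eq_iff (by positivity)]
  constructor
  · rw [le_div_iff₀ ht]
    have hnpos : (0:ℝ) < n := by linarith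
    have : 1 - 1/(n:ℝ) ≤ t := h1
    have h3 : (n:ℝ) * (1/(n:ℝ)) = 1 := by field_simp
    nlinarith
  · rw [div_lt_iff₀ ht]
    have hnp : (0:ℝ) < (n:ℝ)+1 := by linarith
    have h3 : ((n:ℝ)+1) * (1/((n:ℝ)+1)) = 1 := by field_simp
    nlinarith

lemma ntOf_mem {t : ℝ} (h0 : 0 ≤ t) (h1 : t < 1) :
    1 ≤ ntOf t ∧ aSeq (ntOf t) ≤ t ∧ t < aSeq (ntOf t + 1) := by
  have ht : 0 < 1 - t := by linarith
  have hone : (1:ℝ) ≤ 1 / (1 - t) := by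
    rw [le_div_iff₀ ht]; linarith
  have hfl : 1 ≤ ntOf t := by
    rw [ntOf, Nat.le_floor_iff (by positivity)]; exact_mod_cast hone
  refine ⟨hfl, ?_, ?_⟩
  · have hle : (ntOf t : ℝ) ≤ 1 / (1 - t) := Nat.floor_le (by positivity)
    have hnpos : (0:ℝ) < (ntOf t : ℝ) := by exact_mod_cast hfl
    rw [le_div_iff₀ ht] at hle
    have h4 : 1 - t ≤ 1 / (ntOf t : ℝ) := by
      rw [le_div_iff₀ hnpos]; nlinarith
    simp only [aSeq]; linarith
  · have hlt : 1 / (1 - t) < (ntOf t : ℝ) + 1 := Nat.lt_floor_add_one _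
    rw [div_lt_iff₀ ht] at hlt
    have hnp : (0:ℝ) < (ntOf t : ℝ) + 1 := by positivity
    have h4 : 1 / ((ntOf t : ℝ) + 1) < 1 - t := by
      rw [div_lt_iff₀ hnp]; nlinarith
    simp only [aSeq, Nat.cast_add, Nat.cast_one]; linarith

open Metric Set

lemma small_paths {X : Type*} [MetricSpace X] [CompactSpace X] [LocallyPathConnectedSpace X]
    {ε : ℝ} (hε : 0 < ε) :
    ∃ δ > 0, ∀ x y : X, dist x y < δ → ∃ γ : Path x y, ∀ t, dist (γ t) x < ε := by
  have hbasis : ∀ x : X, ∃ s : Set X, s ∈ nhds x ∧ IsPathConnected s ∧ s ⊆ ball x (ε/2) := by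
    intro x
    rcases (path_connected_basis x).mem_iff.mp ((ball_mem_nhds x (half_pos hε) : ball x (ε/2) ∈ nhds x)) with ⟨s, ⟨hs1, hs2⟩, hs3⟩
    exact ⟨s, hs1, hs2, hs3⟩
  choose s hs1 hs2 hs3 using hbasis
  have hcover : (univ : Set X) ⊆ ⋃ x : X, interior (s x) := by
    intro x _
    exact mem_iUnion.2 ⟨x, mem_interior_iff_mem_nhds.2 (hs1 x)⟩
  obtain ⟨δ, hδ, hball⟩ := lebesgue_number_lemma_of_metric isCompact_univ
    (fun x => isOpen_interior) hcover
  refine ⟨δ, hδ, fun x y hxy => ?_⟩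
  obtain ⟨i, hi⟩ := hball x (mem_univ x)
  have hxs : x ∈ s i := interior_subset (hi (mem_ball_self hδ))
  have hys : y ∈ s i := interior_subset (hi (by simpa [mem_ball, dist_comm] using hxy))
  obtain ⟨γ, hγ⟩ := (hs2 i).joinedIn x hxs y hys
  refine ⟨γ, fun t => ?_⟩
  have h1 := hs3 i (hγ t)
  have h2 := hs3 i hxs
  rw [mem_ball] at h1 h2
  calc dist (γ t) x ≤ dist (γ t) i + dist i x := dist_triangle _ _ _
    _ < ε/2 + ε/2 := by rw [dist_comm i x]; linarith
    _ = ε := by ring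

open unitInterval Metric Set Filter


/-- Lemma `alem3`: in a Peano continuum, a convergent sequence `xₙ → x` can be threaded by a
path `T` with `T(0) = x₁`, `T(1) = x` and `T(1 - 1/n) = xₙ` for all `n ≥ 1`. -/
theorem exists_path_through_convergent_sequence
    (X : Type*) [MetricSpace X] [Nonempty X] [CompactSpace X] [ConnectedSpace X]
    [LocallyPathConnectedSpace X]
    (u : ℕ → X) (p : X) (hu : Filter.Tendsto u Filter.atTop (nhds p)) :
    ∃ T : Path (u 1) p, ∀ n : ℕ, 1 ≤ n → T (seqPoint n) = u n := by
    classical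
  have hpc : PathConnectedSpace X := pathConnectedSpace_iff_connectedSpace.2 ‹_›
  set D := Metric.diam (univ : Set X) with hD
  set S : ℕ → Set ℝ := fun n =>
    {ε : ℝ | 0 < ε ∧ ∃ γ : Path (u n) (u (n+1)), ∀ t, dist (γ t) (u n) < ε} with hS
  have hSne : ∀ n, (S n).Nonempty := by
    intro n
    obtain ⟨γ⟩ := hpc.joined (u n) (u (n+1))
    have hD0 : 0 ≤ D := Metric.diam_nonneg
    refine ⟨D + 1, by positivity, γ, fun t => ?_⟩
    have := Metric.dist_le_diam_of_mem isCompact_univ.isBounded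
      (mem_univ (γ t)) (mem_univ (u n))
    linarith
  have hSbdd : ∀ n, BddBelow (S n) := fun n => ⟨0, fun ε hε => hε.1.le⟩
  set e : ℕ → ℝ := fun n => sInf (S n) + 1/((n:ℝ)+1) with he
  have hγex : ∀ n, ∃ γ : Path (u n) (u (n+1)), ∀ t, dist (γ t) (u n) < e n := by
    intro n
    have hlt : sInf (S n) < e n := by
      have : (0:ℝ) < 1/((n:ℝ)+1) := by positivity
      simp only [he]; linarith
    obtain ⟨ε', hε'S, hlt'⟩ := exists_lt_of_csInf_lt (hSne n) hlt
    obtain ⟨hpos, γ, hγ⟩ := hε'S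
    exact ⟨γ, fun t => (hγ t).trans hlt'⟩
  choose γ hγ using hγex
  have hγe : ∀ n (s : ℝ), dist ((γ n).extend s) (u n) < e n := fun n s => hγ n _
  -- eventual smallness of e
  have he_small : ∀ ε : ℝ, 0 < ε → ∃ N, 1 ≤ N ∧ ∀ n, N ≤ n → e n < ε ∧ dist (u n) p < ε := by
    intro ε hε
    obtain ⟨δ, hδ, hsp⟩ := small_paths (X := X) (half_pos hε)
    obtain ⟨N₁, hN₁⟩ := Metric.tendsto_atTop.1 hu (min (δ/2) ε) (lt_min (half_pos hδ) hε)
    obtain ⟨N₂, hN₂⟩ := exists_nat_one_div_lt (half_pos hε)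
    refine ⟨max (max N₁ N₂) 1, le_max_right _ _, fun n hn => ?_⟩
    have hn1 : N₁ ≤ n := le_trans ((le_max_left _ _).trans (le_max_left _ _)) hn
    have hn2 : N₂ ≤ n := le_trans ((le_max_right _ _).trans (le_max_left _ _)) hn
    have hd : dist (u n) p < min (δ/2) ε := hN₁ n hn1
    have hd' : dist (u (n+1)) p < min (δ/2) ε := hN₁ (n+1) (by omega)
    have hdist : dist (u n) (u (n+1)) < δ := by
      have h1 := hd.trans_le (min_le_left _ _)
      have h2 := hd'.trans_le (min_le_left _ _)
      have h3 := dist_triangle (u n) p (u (n+1))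
      rw [dist_comm p (u (n+1))] at h3
      linarith
    obtain ⟨γ', hγ'⟩ := hsp (u n) (u (n+1)) hdist
    have hmem : ε/2 ∈ S n := ⟨half_pos hε, γ', hγ'⟩
    have hinf : sInf (S n) ≤ ε/2 := csInf_le (hSbdd n) hmem
    have hfrac : 1/((n:ℝ)+1) < ε/2 := by
      have hle : 1/((n:ℝ)+1) ≤ 1/((N₂:ℝ)+1) := by
        apply one_div_le_one_div_of_le (by positivity)
        have : (N₂:ℝ) ≤ (n:ℝ) := by exact_mod_cast hn2
        linarith
      linarith
    refine ⟨by simp only [he]; linarith, hd.trans_le (min_le_right _ _)⟩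
  -- the threading function
  set f : ℝ → X := fun t => if t < 1 then
      (γ (ntOf t)).extend ((t - aSeq (ntOf t)) / (aSeq (ntOf t + 1) - aSeq (ntOf t)))
    else p with hf
  have hlen : ∀ n : ℕ, 1 ≤ n → 0 < aSeq (n+1) - aSeq n := fun n hn => sub_pos.2 (aSeq_lt_succ hn)
  have hpiece : ∀ n, 1 ≤ n → ∀ t, t ∈ Ico (aSeq n) (aSeq (n+1)) →
      f t = (γ n).extend ((t - aSeq n) / (aSeq (n+1) - aSeq n)) := by
    intro n hn t ht
    have ht1 : t < 1 := lt_of_lt_of_le ht.2 (aSeq_lt_one (by omega)).le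
    have hnt : ntOf t = n := ntOf_eq hn ht.1 ht.2
    subst hnt
    simp only [hf, if_pos ht1]
  have hval : ∀ n, 1 ≤ n → f (aSeq n) = u n := by
    intro n hn
    rw [hpiece n hn _ ⟨le_refl _, aSeq_lt_succ hn⟩]
    simp [Path.extend_zero]
  have hgcont : ∀ n : ℕ, Continuous (fun s : ℝ =>
      (γ n).extend ((s - aSeq n) / (aSeq (n+1) - aSeq n))) := by
    intro n
    exact (γ n).continuous_extend.comp (by fun_prop)
  -- right continuity
  have hright : ∀ t, 0 ≤ t → t < 1 → ContinuousWithinAt f (Ici t) t := by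
    intro t h0 h1
    obtain ⟨hn1, ha1, ha2⟩ := ntOf_mem h0 h1
    set n := ntOf t with hn
    have hmem : Ico (aSeq n) (aSeq (n+1)) ∈ nhdsWithin t (Ici t) := by
      apply mem_nhdsWithin.2 ⟨Iio (aSeq (n+1)), isOpen_Iio, ha2, ?_⟩
      rintro s ⟨hs1, hs2⟩
      exact ⟨le_trans ha1 hs2, hs1⟩
    refine ContinuousWithinAt.congr_of_eventuallyEq
      ((hgcont n).continuousAt.continuousWithinAt) ?_ (hpiece n hn1 t ⟨ha1, ha2⟩)
    filter_upwards [hmem] with s hs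
    exact hpiece n hn1 s hs
  -- left continuity
  have hleft : ∀ t, 0 < t → t < 1 → ContinuousWithinAt f (Iic t) t := by
    intro t h0 h1
    obtain ⟨hn1, ha1, ha2⟩ := ntOf_mem h0.le h1
    set n := ntOf t with hn
    rcases eq_or_lt_of_le ha1 with heq | hlt
    · -- t is a junction point aSeq n
      have hn2 : 2 ≤ n := by
        by_contra h
        have hone : n = 1 := by omega
        rw [hone, aSeq_one] at heq
        exact absurd heq (ne_of_lt h0)
      set m := n - 1 with hm
      have hm1 : 1 ≤ m := by omega
      have hmn : m + 1 = n := by omega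
      have htm : aSeq m < t := by
        rw [← heq, ← hmn]; exact aSeq_lt_succ hm1
      have hfm : ∀ s ∈ Ioc (aSeq m) t, f s = (γ m).extend ((s - aSeq m) / (aSeq (m+1) - aSeq m)) := by
        intro s hs
        rcases lt_or_eq_of_le hs.2 with hlt' | heq'
        · exact hpiece m hm1 s ⟨hs.1.le, by rw [hmn, heq]; exact hlt'⟩
        · rw [heq', ← heq, hval n (by omega)]
          have hne : aSeq (m+1) - aSeq m ≠ 0 := (hlen m hm1).ne'
          rw [← hmn, div_self hne, Path.extend_one, hmn]
      have hmem : Ioc (aSeq m) t ∈ nhdsWithin t (Iic t) := by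
        apply mem_nhdsWithin.2 ⟨Ioi (aSeq m), isOpen_Ioi, htm, ?_⟩
        rintro s ⟨hs1, hs2⟩
        exact ⟨hs1, hs2⟩
      refine ContinuousWithinAt.congr_of_eventuallyEq
        ((hgcont m).continuousAt.continuousWithinAt) ?_ (hfm t ⟨htm, le_rfl⟩)
      filter_upwards [hmem] with s hs
      exact hfm s hs
    · -- interior of a piece
      have hmem : Ioc (aSeq n) t ∈ nhdsWithin t (Iic t) := by
        apply mem_nhdsWithin.2 ⟨Ioi (aSeq n), isOpen_Ioi, hlt, ?_⟩
        rintro s ⟨hs1, hs2⟩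
        exact ⟨hs1, hs2⟩
      refine ContinuousWithinAt.congr_of_eventuallyEq
        ((hgcont n).continuousAt.continuousWithinAt) ?_ (hpiece n hn1 t ⟨ha1, ha2⟩)
      filter_upwards [hmem] with s hs
      exact hpiece n hn1 s ⟨hs.1.le, lt_of_le_of_lt hs.2 ha2⟩
  -- continuity at 1
  have hat1 : ContinuousWithinAt f (Icc 0 1) 1 := by
    have hf1 : f 1 = p := by simp only [hf]; rw [if_neg (lt_irrefl (1:ℝ))]
    rw [ContinuousWithinAt, hf1, Metric.tendsto_nhds]
    intro ε hε
    obtain ⟨N, hN1, hN⟩ := he_small (ε/2) (half_pos hε)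
    have hNlt : aSeq N < 1 := aSeq_lt_one hN1
    have hmem : Ioi (aSeq N) ∈ nhdsWithin (1:ℝ) (Icc 0 1) :=
      mem_nhdsWithin_of_mem_nhds (Ioi_mem_nhds hNlt)
    filter_upwards [hmem] with s hs
    rcases lt_or_ge s 1 with hs1 | hs1
    · have hs0 : 0 ≤ s := le_trans (aSeq_nonneg hN1) (le_of_lt hs)
      obtain ⟨hm1, hb1, hb2⟩ := ntOf_mem hs0 hs1
      set n := ntOf s with hn
      have hnN : N ≤ n := by
        by_contra h
        push_neg at h
        have h5 : aSeq (n+1) ≤ aSeq N := aSeq_mono (by omega) (by omega)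
        have h6 : s < aSeq N := lt_of_lt_of_le hb2 h5
        exact absurd hs (not_lt.2 h6.le)
      rw [hpiece n hm1 s ⟨hb1, hb2⟩]
      have h1 := hγe n ((s - aSeq n)/(aSeq (n+1) - aSeq n))
      have h2 := (hN n hnN).1
      have h3 := (hN n hnN).2
      calc dist ((γ n).extend ((s - aSeq n)/(aSeq (n+1) - aSeq n))) p
          ≤ dist ((γ n).extend ((s - aSeq n)/(aSeq (n+1) - aSeq n))) (u n) + dist (u n) p :=
            dist_triangle _ _ _
        _ < ε/2 + ε/2 := by exact add_lt_add (lt_trans h1 h2) h3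
        _ = ε := by ring
    · have hfs : f s = p := by simp only [hf, if_neg (not_lt.2 hs1)]
      simp [hfs, hε]
  -- assemble
  have hcont : ContinuousOn f (Icc 0 1) := by
    intro t ht
    rcases eq_or_lt_of_le ht.2 with h1 | h1
    · rw [h1]; exact hat1
    rcases eq_or_lt_of_le ht.1 with h0 | h0
    · exact (hright t h0.le h1).mono (by rw [← h0]; exact fun s hs => hs.1)
    · have hca : ContinuousAt f t := by
        rw [continuousAt_iff_continuous_left_right]
        exact ⟨hleft t h0 h1, hright t h0.le h1⟩
      exact hca.continuousWithinAt
  have hrestr : Continuous fun s : unitInterval => f s := by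
    rw [continuousOn_iff_continuous_restrict] at hcont
    exact hcont
  refine ⟨{ toFun := fun s => f s,
            continuous_toFun := hrestr,
            source' := ?_,
            target' := ?_ }, ?_⟩
  · show f ((0 : unitInterval) : ℝ) = u 1
    have h := hval 1 le_rfl
    rw [aSeq_one] at h
    simpa using h
  · show f ((1 : unitInterval) : ℝ) = p
    simp only [hf]
    norm_num
  · intro n hn
    show f _ = u n
    exact hval n hn
end
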